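/- The radius of the circle passing through the three points γ(τ_{n-1}), γ(τ_n), γ(τ_{n+1}), where γ(τ_m) = N^{-1/2} S(α, m) and S(α, m) = ∑_{j=0}^{m-1} exp(πi j² α), equals (2√N)^{-1} |csc(π α (2n-1)/2)|, provided the three points are not collinear. -/

import Mathlib

set_option maxHeartbeats 1000000


/-- The radius of the circle through the three consecutive points
`γ(τ_{n-1}), γ(τ_n), γ(τ_{n+1})` of the normalized theta-sum curve equals
`(2√N)⁻¹ |csc(π α (2n-1)/2)|`, provided the three points are not collinear. -/
theorem discrete_radius_of_curvature (α : ℝ) (N n : ℕ)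
    (hα : α ∈ Set.Ioc (0:ℝ) 1) (hn : 1 ≤ n) (hnN : n + 1 ≤ N)
    (γ : ℕ → ℂ)
    (hγ : ∀ m : ℕ, γ m = (Real.sqrt N)⁻¹ •
      ∑ j ∈ Finset.range m, Complex.exp (Real.pi * Complex.I * (j : ℂ) ^ 2 * (α : ℂ)))
    (c : ℂ) (r : ℝ)
    (h₀ : dist (γ (n - 1)) c = r) (h₁ : dist (γ n) c = r) (h₂ : dist (γ (n + 1)) c = r)
    (hcol : ¬ Collinear ℝ ({γ (n - 1), γ n, γ (n + 1)} : Set ℂ)) :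
    r = (2 * Real.sqrt N)⁻¹ * |1 / Real.sin (Real.pi * α * (2 * (n : ℝ) - 1) / 2)| := by
  obtain ⟨m, rfl⟩ : ∃ m, n = m + 1 := ⟨n - 1, by omega⟩
  simp only [Nat.add_sub_cancel] at h₀ hcol
  have hNpos : (0:ℝ) < Real.sqrt N := Real.sqrt_pos.mpr (by exact_mod_cast Nat.pos_of_ne_zero (by omega))
  set L : ℝ := (Real.sqrt N)⁻¹ with hLdef
  have hLpos : 0 < L := inv_pos.mpr hNpos
  set φ : ℝ := Real.pi * (m:ℝ)^2 * α with hφ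
  set θ : ℝ := Real.pi * α * (2*(m:ℝ)+1) with hθ
  have hu : γ (m+1) - γ m = L • Complex.exp ((φ:ℂ) * Complex.I) := by
    rw [hγ (m+1), hγ m, Finset.sum_range_succ, smul_add, add_sub_cancel_left]
    congr 2
    push_cast [hφ]
    ring
  have hv : γ (m+1+1) - γ (m+1) = L • Complex.exp (((φ+θ:ℝ):ℂ) * Complex.I) := by
    rw [hγ (m+1+1), hγ (m+1), Finset.sum_range_succ, smul_add, add_sub_cancel_left]
    congr 2
    push_cast [hφ, hθ]
    ring
  -- real and imaginary parts of the chords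
  have hur : (γ (m+1) - γ m).re = L * Real.cos φ := by
    rw [hu, Complex.smul_re, Complex.exp_ofReal_mul_I_re, smul_eq_mul]
  have hui : (γ (m+1) - γ m).im = L * Real.sin φ := by
    rw [hu, Complex.smul_im, Complex.exp_ofReal_mul_I_im, smul_eq_mul]
  have hvr : (γ (m+1+1) - γ (m+1)).re = L * Real.cos (φ+θ) := by
    rw [hv, Complex.smul_re, Complex.exp_ofReal_mul_I_re, smul_eq_mul]
  have hvi : (γ (m+1+1) - γ (m+1)).im = L * Real.sin (φ+θ) := by
    rw [hv, Complex.smul_im, Complex.exp_ofReal_mul_I_im, smul_eq_mul]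
  -- sin θ ≠ 0 from non-collinearity
  have hsθ : Real.sin θ ≠ 0 := by
    intro hs
    apply hcol
    rw [collinear_iff_exists_forall_eq_smul_vadd]
    refine ⟨γ m, γ (m+1) - γ m, ?_⟩
    intro p hp
    have hexpθ : Complex.exp ((θ:ℂ) * Complex.I) = ((Real.cos θ : ℝ) : ℂ) := by
      rw [Complex.exp_mul_I, ← Complex.ofReal_cos, ← Complex.ofReal_sin, hs]
      simp
    have hv' : γ (m+1+1) - γ (m+1) = (Real.cos θ) • (γ (m+1) - γ m) := by
      rw [hu, hv, Complex.ofReal_add, add_mul, Complex.exp_add, hexpθ]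
      simp only [Complex.real_smul]
      ring
    simp only [Set.mem_insert_iff, Set.mem_singleton_iff] at hp
    rcases hp with rfl | rfl | rfl
    · exact ⟨0, by simp⟩
    · refine ⟨1, ?_⟩
      simp only [one_smul, vadd_eq_add]
      ring
    · refine ⟨1 + Real.cos θ, ?_⟩
      simp only [vadd_eq_add, add_smul, one_smul]
      have : γ (m+1+1) = (Real.cos θ) • (γ (m+1) - γ m) + γ (m+1) := by
        rw [← hv']; ring
      rw [this]
      have huu : γ (m+1) = (γ (m+1) - γ m) + γ m := by ring
      nth_rewrite 2 [huu]
      ring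
  set x : ℝ := (γ m - c).re with hx
  set y : ℝ := (γ m - c).im with hy
  set cφ : ℝ := Real.cos φ
  set sφ : ℝ := Real.sin φ
  set cθ : ℝ := Real.cos θ
  set sθ : ℝ := Real.sin θ
  have edist : ∀ z : ℂ, dist z c = r → ((z - c).re)^2 + ((z - c).im)^2 = r^2 := by
    intro z hz
    have h1 : (‖z - c‖)^2 = r^2 := by rw [← Complex.dist_eq, hz]
    rw [Complex.sq_norm, Complex.normSq_apply] at h1
    nlinarith [h1]
  have e1 : x^2 + y^2 = r^2 := edist _ h₀
  have d1 : γ (m+1) - c = (γ m - c) + (γ (m+1) - γ m) := by ring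
  have d2 : γ (m+1+1) - c = (γ m - c) + (γ (m+1) - γ m) + (γ (m+1+1) - γ (m+1)) := by ring
  have e2 : (x + L*cφ)^2 + (y + L*sφ)^2 = r^2 := by
    have := edist _ h₁
    rw [d1, Complex.add_re, Complex.add_im, hur, hui] at this
    exact this
  have e3 : (x + L*cφ + L*(cφ*cθ - sφ*sθ))^2 + (y + L*sφ + L*(sφ*cθ + cφ*sθ))^2 = r^2 := by
    have := edist _ h₂
    rw [d2, Complex.add_re, Complex.add_im, Complex.add_re, Complex.add_im,
      hur, hui, hvr, hvi, Real.cos_add, Real.sin_add] at this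
    convert this using 3 <;> ring
  have pythφ : sφ^2 + cφ^2 = 1 := Real.sin_sq_add_cos_sq φ
  have pythθ : sθ^2 + cθ^2 = 1 := Real.sin_sq_add_cos_sq θ
  -- first chord relation
  have hP : x*cφ + y*sφ = -(L/2) := by
    have hA : L * (2*(x*cφ + y*sφ) + L) = 0 := by linear_combination e2 - e1 - L^2 * pythφ
    rcases mul_eq_zero.mp hA with h | h
    · exact absurd h hLpos.ne'
    · linarith
  -- second chord relation
  have hQ : sθ * (x*sφ - y*cφ) = L*(1+cθ)/2 := by
    have hB : L * (sθ * (x*sφ - y*cφ) - L*(1+cθ)/2) = 0 := by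
      linear_combination (-(1:ℝ)/2) * (e3 - e2) + (L^2/2 * (cθ^2 + sθ^2) + L^2*cθ) * pythφ
        + (L^2/2) * pythθ + (L*cθ) * hP
    rcases mul_eq_zero.mp hB with h | h
    · exact absurd h hLpos.ne'
    · linarith
  have hr2' : r^2 * sθ^2 = L^2 * (1+cθ) / 2 := by
    linear_combination (-(sθ^2)) * e1 - sθ^2*(x^2+y^2) * pythφ + sθ^2*(x*cφ + y*sφ - L/2) * hP
      + (sθ*(x*sφ - y*cφ) + L*(1+cθ)/2) * hQ + (L^2/4) * pythθ
  have h1c : (1:ℝ) + cθ ≠ 0 := by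
    intro h
    have : sθ^2 = 0 := by linear_combination pythθ + (1-cθ) * h
    exact hsθ (pow_eq_zero_iff (by norm_num) |>.mp this)
  have r2eq : r^2 * (1 - cθ) = L^2 / 2 := by
    have h' : (r^2 * (1 - cθ)) * (1+cθ) = (L^2/2) * (1+cθ) := by
      linear_combination hr2' - r^2 * pythθ
    exact mul_right_cancel₀ h1c h'
  set s : ℝ := Real.sin (θ/2) with hsdef
  have hhalf : s^2 = (1 - cθ)/2 := by
    show Real.sin (θ/2)^2 = (1 - Real.cos θ)/2
    have hc := Real.cos_two_mul (θ/2)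
    rw [show 2*(θ/2) = θ by ring] at hc
    have hpy := Real.sin_sq_add_cos_sq (θ/2)
    linear_combination hpy + (1/2)*hc
  have hs0 : s ≠ 0 := by
    intro h
    have hc1 : cθ = 1 := by
      have h2 := hhalf; rw [h] at h2; linear_combination 2*h2
    have : sθ^2 = 0 := by linear_combination pythθ - (cθ+1) * hc1
    exact hsθ (pow_eq_zero_iff (by norm_num) |>.mp this)
  have hr0 : (0:ℝ) ≤ r := h₀ ▸ dist_nonneg
  have harg : Real.pi * α * (2 * ((m+1:ℕ):ℝ) - 1) / 2 = θ/2 := by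
    push_cast
    rw [hθ]
    ring
  rw [harg, show (2 * Real.sqrt N)⁻¹ = L/2 by rw [mul_inv, hLdef]; ring]
  have hRHS0 : (0:ℝ) ≤ L/2 * |1/s| := by positivity
  have key2 : r^2 * s^2 = (L/2)^2 := by
    linear_combination r^2 * hhalf + (1/2) * r2eq
  have hsq : r^2 = (L/2 * |1/s|)^2 := by
    rw [mul_pow, sq_abs]
    field_simp
    linear_combination 4 * key2
  calc r = Real.sqrt (r^2) := (Real.sqrt_sq hr0).symm
    _ = Real.sqrt ((L/2 * |1/s|)^2) := by rw [hsq]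
    _ = L/2 * |1/s| := Real.sqrt_sq hRHS0
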